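/- arXiv:1503.00563 — 5 statements merged into one kernel-verified Lean document; each statement's English description precedes it below -/
import Mathlib

section
/- Let X be a compact Hausdorff space, A ⊆ X a nonempty proper closed subset, and a ∈ [0,1]. Define ν₁ on closed sets C by: ν₁(C) = 0 if A \ C ≠ ∅; ν₁(C) = a if A ⊆ C and C ≠ X; ν₁(X) = 1. Then ν₁ is a capacity (normalized, monotone, upper-semicontinuous), and for any capacity α on X, ν₁ ≤ α (pointwise on closed sets) if and only if α(A) ≥ a. -/
open Classical

/-- An upper-semicontinuous capacity on a compact Hausdorff space `X`:
a monotone, normalized, `[0,1]`-valued set function on closed subsets,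
extended to arbitrary subsets by inner regularity. -/
structure Capacity (X : Type*) [TopologicalSpace X] where
  toFun : Set X → ℝ
  nonneg : ∀ S : Set X, 0 ≤ toFun S
  le_one : ∀ S : Set X, toFun S ≤ 1
  empty : toFun ∅ = 0
  univ : toFun Set.univ = 1
  mono : ∀ ⦃F G : Set X⦄, IsClosed F → IsClosed G → F ⊆ G → toFun F ≤ toFun G
  innerReg : ∀ S : Set X, toFun S = sSup (toFun '' {K : Set X | IsClosed K ∧ K ⊆ S})
  usc : ∀ ⦃F : Set X⦄ ⦃a : ℝ⦄, IsClosed F → toFun F < a →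
    ∃ O : Set X, IsOpen O ∧ F ⊆ O ∧ ∀ ⦃B : Set X⦄, IsClosed B → B ⊆ O → toFun B < a

noncomputable def nuF {X : Type*} (A : Set X) (a : ℝ) (S : Set X) : ℝ :=
  if S = Set.univ then 1 else if A ⊆ S then a else 0

lemma nuF_nonneg {X : Type*} (A : Set X) {a : ℝ} (ha0 : 0 ≤ a) (S : Set X) :
    0 ≤ nuF A a S := by
  unfold nuF; split_ifs <;> linarith

lemma nuF_le_one {X : Type*} (A : Set X) {a : ℝ} (ha1 : a ≤ 1) (S : Set X) :
    nuF A a S ≤ 1 := by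
  unfold nuF; split_ifs <;> linarith

lemma nuF_mono {X : Type*} (A : Set X) {a : ℝ} (ha0 : 0 ≤ a) (ha1 : a ≤ 1)
    {F G : Set X} (h : F ⊆ G) : nuF A a F ≤ nuF A a G := by
  unfold nuF
  by_cases hF : F = Set.univ
  · have hG : G = Set.univ := Set.eq_univ_of_univ_subset (hF ▸ h)
    simp [hF, hG]
  by_cases hG : G = Set.univ
  · simp [hF, hG]; split_ifs <;> linarith
  simp only [hF, hG, if_false]
  by_cases hAF : A ⊆ F
  · simp [hAF, hAF.trans h]
  · simp only [hAF, if_false]; split_ifs <;> linarith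

/-- For a nonempty proper closed `A ⊆ X` and `a ∈ [0,1]`, the set function `ν₁` with
`ν₁(C) = 0` if `A ⊄ C`, `ν₁(C) = a` if `A ⊆ C ≠ X`, `ν₁(X) = 1` is a capacity, and for
every capacity `α`, `ν₁ ≤ α` pointwise on closed sets iff `α(A) ≥ a`. -/
theorem nu_one_capacity {X : Type*} [TopologicalSpace X] [CompactSpace X] [T2Space X]
    (A : Set X) (hAc : IsClosed A) (hAne : A.Nonempty) (hAprop : A ≠ Set.univ)
    (a : ℝ) (ha : a ∈ Set.Icc (0 : ℝ) 1) :
    ∃ ν₁ : Capacity X,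
      (∀ C : Set X, IsClosed C →
        ν₁.toFun C = if C = Set.univ then 1 else if A ⊆ C then a else 0) ∧
      ∀ α : Capacity X,
        ((∀ C : Set X, IsClosed C → ν₁.toFun C ≤ α.toFun C) ↔ a ≤ α.toFun A) := by
  obtain ⟨ha0, ha1⟩ := ha
  have hXne : Nonempty X := ⟨hAne.choose⟩
  have hempty : nuF A a (∅ : Set X) = 0 := by
    unfold nuF
    rw [if_neg (Set.empty_ne_univ), if_neg]
    exact fun h => hAne.ne_empty (Set.subset_empty_iff.mp h)
  have hbdd : ∀ S : Set X, BddAbove (nuF A a '' {K : Set X | IsClosed K ∧ K ⊆ S}) := by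
    intro S
    exact ⟨1, by rintro x ⟨K, _, rfl⟩; exact nuF_le_one A ha1 K⟩
  have hinner : ∀ S : Set X, nuF A a S = sSup (nuF A a '' {K : Set X | IsClosed K ∧ K ⊆ S}) := by
    intro S
    apply le_antisymm
    · apply le_csSup (hbdd S)
      by_cases hS : S = Set.univ
      · subst hS; exact ⟨Set.univ, ⟨isClosed_univ, subset_rfl⟩, rfl⟩
      by_cases hAS : A ⊆ S
      · refine ⟨A, ⟨hAc, hAS⟩, ?_⟩
        have hAuniv : A ≠ Set.univ := hAprop
        unfold nuF
        rw [if_neg hAuniv, if_pos (subset_refl A), if_neg hS, if_pos hAS]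
      · refine ⟨∅, ⟨isClosed_empty, Set.empty_subset S⟩, ?_⟩
        rw [hempty]
        unfold nuF
        rw [if_neg hS, if_neg hAS]
    · refine csSup_le ⟨nuF A a ∅, ⟨∅, ⟨isClosed_empty, Set.empty_subset S⟩, rfl⟩⟩ ?_
      rintro x ⟨K, ⟨_, hKS⟩, rfl⟩
      exact nuF_mono A ha0 ha1 hKS
  have husc : ∀ ⦃F : Set X⦄ ⦃b : ℝ⦄, IsClosed F → nuF A a F < b →
      ∃ O : Set X, IsOpen O ∧ F ⊆ O ∧ ∀ ⦃B : Set X⦄, IsClosed B → B ⊆ O → nuF A a B < b := by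
    intro F b _ hFb
    by_cases hF : F = Set.univ
    · refine ⟨Set.univ, isOpen_univ, Set.subset_univ _, fun B _ _ => ?_⟩
      have : nuF A a F = 1 := by unfold nuF; rw [if_pos hF]
      calc nuF A a B ≤ 1 := nuF_le_one A ha1 B
        _ < b := this ▸ hFb
    by_cases hAF : A ⊆ F
    · -- nuF F = a < b; take complement of a point outside F
      have haF : nuF A a F = a := by unfold nuF; rw [if_neg hF, if_pos hAF]
      obtain ⟨x, hx⟩ : ∃ x, x ∉ F := by
        by_contra h
        push_neg at h
        exact hF (Set.eq_univ_of_forall h)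
      refine ⟨{x}ᶜ, isClosed_singleton.isOpen_compl, fun y hy => ?_, fun B _ hBO => ?_⟩
      · simp only [Set.mem_compl_iff, Set.mem_singleton_iff]
        rintro rfl; exact hx hy
      · have hBuniv : B ≠ Set.univ := by
          intro h
          have : x ∈ B := h ▸ Set.mem_univ x
          exact hBO this rfl
        have : nuF A a B ≤ a := by
          unfold nuF; rw [if_neg hBuniv]; split_ifs <;> linarith
        calc nuF A a B ≤ a := this
          _ < b := haF ▸ hFb
    · -- nuF F = 0 < b; take complement of a point of A outside F
      have h0F : nuF A a F = 0 := by unfold nuF; rw [if_neg hF, if_neg hAF]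
      obtain ⟨y, hyA, hyF⟩ : ∃ y, y ∈ A ∧ y ∉ F := by
        by_contra h
        push_neg at h
        exact hAF h
      refine ⟨{y}ᶜ, isClosed_singleton.isOpen_compl, fun z hz => ?_, fun B _ hBO => ?_⟩
      · simp only [Set.mem_compl_iff, Set.mem_singleton_iff]
        rintro rfl; exact hyF hz
      · have hBuniv : B ≠ Set.univ := by
          intro h
          have : y ∈ B := h ▸ Set.mem_univ y
          exact hBO this rfl
        have hAB : ¬ A ⊆ B := fun h => hBO (h hyA) rfl
        have : nuF A a B = 0 := by unfold nuF; rw [if_neg hBuniv, if_neg hAB]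
        calc nuF A a B = 0 := this
          _ < b := h0F ▸ hFb
  refine ⟨⟨nuF A a, nuF_nonneg A ha0, nuF_le_one A ha1, hempty,
    by unfold nuF; rw [if_pos rfl],
    fun F G _ _ h => nuF_mono A ha0 ha1 h, hinner, husc⟩, fun C _ => rfl, ?_⟩
  intro α
  constructor
  · intro h
    have := h A hAc
    have hval : nuF A a A = a := by
      unfold nuF; rw [if_neg hAprop, if_pos (subset_refl A)]
    linarith [this, hval]
  · intro h C hC
    simp only
    unfold nuF
    by_cases hCu : C = Set.univ
    · rw [if_pos hCu, hCu, α.univ]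
    rw [if_neg hCu]
    by_cases hAC : A ⊆ C
    · rw [if_pos hAC]
      exact h.trans (α.mono hAc hC hAC)
    · rw [if_neg hAC]
      exact α.nonneg C
end

section
/- Let X₁, X₂ be compact Hausdorff spaces, μ₁ a capacity on X₁ and μ₂ a capacity on X₂. Define the tensor product μ₁ ⊗ μ₂ on closed B ⊆ X₁ × X₂ by (μ₁⊗μ₂)(B) = sup{t ∈ [0,1] | μ₁({x ∈ X₁ | μ₂(p₂((({x} × X₂) ∩ B))) ≥ t}) ≥ t}, where p₂ is the projection to X₂. Suppose A₁ ⊆ X₁ and A₂ ⊆ X₂ are closed and μᵢ(K) = 0 for every compact K ⊆ Xᵢ \ Aᵢ (i = 1,2). Then (μ₁⊗μ₂)(B) = 0 for every compact B ⊆ (X₁ × X₂) \ (A₁ × A₂). -/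
/-- Lemma on the tensor product of capacities: if `μᵢ` vanishes on all compact subsets of
`Xᵢ \ Aᵢ` (with `Aᵢ` closed), then the tensor product `μ₁ ⊗ μ₂`, given by
`(μ₁⊗μ₂)(B) = sup{t ∈ [0,1] | μ₁({x | μ₂(p₂(({x}×X₂) ∩ B)) ≥ t}) ≥ t}`,
vanishes on every compact `B ⊆ (X₁ × X₂) \ (A₁ × A₂)`. -/
theorem tensor_vanishes_off_product {X₁ X₂ : Type*}
    [TopologicalSpace X₁] [TopologicalSpace X₂]
    [CompactSpace X₁] [CompactSpace X₂] [T2Space X₁] [T2Space X₂]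
    (μ₁ : Capacity X₁) (μ₂ : Capacity X₂)
    (A₁ : Set X₁) (A₂ : Set X₂) (hA₁ : IsClosed A₁) (hA₂ : IsClosed A₂)
    (h₁ : ∀ K : Set X₁, IsCompact K → K ⊆ A₁ᶜ → μ₁.toFun K = 0)
    (h₂ : ∀ K : Set X₂, IsCompact K → K ⊆ A₂ᶜ → μ₂.toFun K = 0)
    (B : Set (X₁ × X₂)) (hB : IsCompact B) (hBsub : B ⊆ (A₁ ×ˢ A₂)ᶜ) :
    sSup {t : ℝ | t ∈ Set.Icc (0 : ℝ) 1 ∧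
      t ≤ μ₁.toFun {x : X₁ |
        t ≤ μ₂.toFun (Prod.snd '' (({x} ×ˢ (Set.univ : Set X₂)) ∩ B))}} = 0 := by
  -- The capacity of any section over a point of `A₁` vanishes.
  have hsec : ∀ x : X₁, x ∈ A₁ →
      μ₂.toFun (Prod.snd '' (({x} ×ˢ (Set.univ : Set X₂)) ∩ B)) = 0 := by
    intro x hx
    set Sx := Prod.snd '' (({x} ×ˢ (Set.univ : Set X₂)) ∩ B) with hSx
    have himg : Sx ⊆ A₂ᶜ := by
      rintro y ⟨⟨x', y'⟩, ⟨⟨hx', -⟩, hmem⟩, rfl⟩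
      simp only [Set.mem_singleton_iff] at hx'
      subst hx'
      intro hy
      exact hBsub hmem ⟨hx, hy⟩
    rw [μ₂.innerReg Sx]
    have himage : μ₂.toFun '' {K : Set X₂ | IsClosed K ∧ K ⊆ Sx} = {0} := by
      ext v
      constructor
      · rintro ⟨K, ⟨hKc, hKs⟩, rfl⟩
        exact h₂ K hKc.isCompact (hKs.trans himg)
      · rintro rfl
        exact ⟨∅, ⟨isClosed_empty, Set.empty_subset _⟩, μ₂.empty⟩
    rw [himage, csSup_singleton]
  have hzero : (0 : ℝ) ∈ {t : ℝ | t ∈ Set.Icc (0 : ℝ) 1 ∧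
      t ≤ μ₁.toFun {x : X₁ |
        t ≤ μ₂.toFun (Prod.snd '' (({x} ×ˢ (Set.univ : Set X₂)) ∩ B))}} :=
    ⟨⟨le_refl 0, zero_le_one⟩, μ₁.nonneg _⟩
  have hbdd : BddAbove {t : ℝ | t ∈ Set.Icc (0 : ℝ) 1 ∧
      t ≤ μ₁.toFun {x : X₁ |
        t ≤ μ₂.toFun (Prod.snd '' (({x} ×ˢ (Set.univ : Set X₂)) ∩ B))}} :=
    ⟨1, fun t ht => ht.1.2⟩
  refine le_antisymm (Real.sSup_le ?_ le_rfl) (le_csSup hbdd hzero)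
  rintro t ⟨⟨ht0, ht1⟩, htμ⟩
  by_contra hpos
  push_neg at hpos
  set E := {x : X₁ | t ≤ μ₂.toFun (Prod.snd '' (({x} ×ˢ (Set.univ : Set X₂)) ∩ B))} with hE
  have hsup : 0 < sSup (μ₁.toFun '' {K : Set X₁ | IsClosed K ∧ K ⊆ E}) := by
    have := μ₁.innerReg E
    rw [← this]
    exact lt_of_lt_of_le hpos htμ
  have hne : (μ₁.toFun '' {K : Set X₁ | IsClosed K ∧ K ⊆ E}).Nonempty :=
    ⟨μ₁.toFun ∅, ∅, ⟨isClosed_empty, Set.empty_subset _⟩, rfl⟩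
  have hbdd2 : BddAbove (μ₁.toFun '' {K : Set X₁ | IsClosed K ∧ K ⊆ E}) := by
    refine ⟨1, ?_⟩
    rintro v ⟨K, -, rfl⟩
    exact μ₁.le_one K
  obtain ⟨v, ⟨K, ⟨hKc, hKE⟩, rfl⟩, hv⟩ := (lt_csSup_iff hbdd2 hne).mp hsup
  -- `K` cannot lie in `A₁ᶜ`
  have : ¬ K ⊆ A₁ᶜ := fun hsub => by
    have := h₁ K hKc.isCompact hsub
    rw [this] at hv; exact absurd hv (lt_irrefl 0)
  obtain ⟨x, hxK, hxA⟩ := Set.not_subset.mp this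
  rw [Set.notMem_compl_iff] at hxA
  have hxE : x ∈ E := hKE hxK
  rw [hE, Set.mem_setOf_eq, hsec x hxA] at hxE
  exact absurd (lt_of_lt_of_le hpos hxE) (lt_irrefl 0)
end

section
/- Let X be a compact Hausdorff space, μ a capacity on X, ψ : [0,1] → [−∞,+∞] an increasing homeomorphism of [0,1] onto the extended reals (ψ(0) = −∞, ψ(1) = +∞), and f : X → ℝ continuous. Then the set {t ∈ ℝ | μ(f⁻¹([t,∞))) ≥ ψ⁻¹(t)} is nonempty and has a maximum; this maximum defines the (modified) Sugeno integral ∫^{Sug}_X f dμ. -/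
/-- The (modified) Sugeno integral is well defined: for a capacity `μ` on a nonempty
compactum `X`, a correction homeomorphism `ψ` (represented by its inverse
`φ = ψ⁻¹ : ℝ → (0,1)`, an increasing continuous bijection onto `Ioo 0 1`), and a
continuous `f : X → ℝ`, the set `{t | μ(f⁻¹([t,∞))) ≥ ψ⁻¹(t)}` is nonempty and has a
maximum. -/
theorem sugeno_integral_exists {X : Type*} [TopologicalSpace X] [CompactSpace X]
    [T2Space X] [Nonempty X] (μ : Capacity X)
    (φ : ℝ → ℝ) (hφmono : StrictMono φ) (hφcont : Continuous φ)
    (hφrange : Set.range φ = Set.Ioo (0 : ℝ) 1)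
    (f : X → ℝ) (hf : Continuous f) :
    ∃ t₀ : ℝ, IsGreatest {t : ℝ | φ t ≤ μ.toFun (f ⁻¹' Set.Ici t)} t₀ := by
  have hφmem : ∀ t, φ t ∈ Set.Ioo (0:ℝ) 1 := fun t => hφrange ▸ Set.mem_range_self t
  have hclosed : ∀ t : ℝ, IsClosed (f ⁻¹' Set.Ici t) := fun t => isClosed_Ici.preimage hf
  obtain ⟨x₀, -, hmin'⟩ := isCompact_univ.exists_isMinOn Set.univ_nonempty hf.continuousOn
  obtain ⟨x₁, -, hmax'⟩ := isCompact_univ.exists_isMaxOn Set.univ_nonempty hf.continuousOn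
  have hmin : ∀ x : X, x ∈ Set.univ → f x₀ ≤ f x := isMinOn_iff.1 hmin'
  have hmax : ∀ x : X, x ∈ Set.univ → f x ≤ f x₁ := isMaxOn_iff.1 hmax'
  set S := {t : ℝ | φ t ≤ μ.toFun (f ⁻¹' Set.Ici t)} with hS
  have hSne : (f x₀) ∈ S := by
    have huniv : f ⁻¹' Set.Ici (f x₀) = Set.univ := by
      ext x; simpa using hmin x (Set.mem_univ x)
    simp only [hS, Set.mem_setOf_eq, huniv, μ.univ]
    exact (hφmem _).2.le
  have hSbdd : BddAbove S := by
    refine ⟨f x₁, fun t ht => ?_⟩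
    by_contra h
    push_neg at h
    have hempty : f ⁻¹' Set.Ici t = ∅ := by
      ext x
      simp only [Set.mem_preimage, Set.mem_Ici, Set.mem_empty_iff_false, iff_false, not_le]
      exact lt_of_le_of_lt (hmax x trivial) h
    rw [hS, Set.mem_setOf_eq, hempty, μ.empty] at ht
    exact absurd ht (not_le.2 (hφmem t).1)
  set t₀ := sSup S with ht₀
  refine ⟨t₀, ?_, fun t ht => le_csSup hSbdd ht⟩
  by_contra h
  rw [hS, Set.mem_setOf_eq, not_le] at h
  set a := (μ.toFun (f ⁻¹' Set.Ici t₀) + φ t₀) / 2 with ha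
  have ha1 : μ.toFun (f ⁻¹' Set.Ici t₀) < a := by rw [ha]; linarith
  have ha2 : a < φ t₀ := by rw [ha]; linarith
  obtain ⟨O, hO, hFO, hB⟩ := μ.usc (hclosed t₀) ha1
  -- compactness: some n with f⁻¹ Ici (t₀ - 1/(n+1)) ⊆ O
  have hinter : (Oᶜ) ∩ ⋂ n : ℕ, f ⁻¹' Set.Ici (t₀ - 1/(n+1)) = ∅ := by
    ext x
    simp only [Set.mem_inter_iff, Set.mem_iInter, Set.mem_compl_iff, Set.mem_preimage,
      Set.mem_Ici, Set.mem_empty_iff_false, iff_false, not_and]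
    intro hx hall
    refine hx (hFO ?_)
    show t₀ ≤ f x
    by_contra hlt
    push_neg at hlt
    obtain ⟨n, hn⟩ := exists_nat_one_div_lt (sub_pos.2 hlt)
    have := hall n
    linarith
  obtain ⟨T, hT⟩ := (hO.isClosed_compl.isCompact).elim_finite_subfamily_closed _
    (fun n : ℕ => hclosed _) hinter
  set N := T.sup id with hN
  have hsubO : f ⁻¹' Set.Ici (t₀ - 1/(N+1)) ⊆ O := by
    intro x hx
    by_contra hxO
    have hxmem : x ∈ (Oᶜ) ∩ ⋂ n ∈ T, f ⁻¹' Set.Ici (t₀ - 1/(n+1)) := by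
      refine ⟨hxO, ?_⟩
      simp only [Set.mem_iInter, Set.mem_preimage, Set.mem_Ici]
      intro i hi
      have hiN : (i : ℕ) ≤ N := Finset.le_sup (f := id) hi
      have h1 : (1 : ℝ)/(N+1) ≤ 1/(i+1) := by
        apply one_div_le_one_div_of_le
        · positivity
        · exact_mod_cast by omega
      have := Set.mem_preimage.1 hx
      rw [Set.mem_Ici] at this
      linarith
    rw [hT] at hxmem
    exact hxmem
  set s := t₀ - 1/(N+1) with hs
  have hslt : s < t₀ := by
    rw [hs]
    have : (0:ℝ) < 1/(N+1) := by positivity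
    linarith
  -- continuity of φ at t₀: eventually φ u > a
  have hev : ∀ᶠ u in nhds t₀, a < φ u :=
    (hφcont.continuousAt (x := t₀)).eventually_const_lt ha2
  obtain ⟨ε, hε, hball⟩ := Metric.eventually_nhds_iff.1 hev
  have hblt : max s (t₀ - ε) < t₀ := max_lt hslt (by linarith)
  obtain ⟨t, htS, hbt⟩ := exists_lt_of_lt_csSup ⟨f x₀, hSne⟩ hblt
  have htle : t ≤ t₀ := le_csSup hSbdd htS
  have hφt : a < φ t := by
    apply hball
    rw [Real.dist_eq, abs_lt]
    constructor
    · have := lt_of_le_of_lt (le_max_right s (t₀ - ε)) hbt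
      linarith
    · linarith
  have hsub' : f ⁻¹' Set.Ici t ⊆ f ⁻¹' Set.Ici s := by
    intro x hx
    have hxt : t ≤ f x := hx
    have hst : s ≤ t := le_of_lt (lt_of_le_of_lt (le_max_left _ _) hbt)
    show s ≤ f x
    linarith
  have := hB (hclosed t) (hsub'.trans hsubO)
  rw [hS, Set.mem_setOf_eq] at htS
  linarith
end

section
/- Let X, Y be nonempty compact Hausdorff spaces, M(Y) the space of capacities on Y with the topology generated by the sets O₋(F,a) = {ν | ν(F) < a} (F closed) and O₊(U,a) = {ν | ν(U) > a} (U open, with ν(U) = sup{ν(K) | K ⊆ U closed}). Let p : X × Y → ℝ be continuous, ψ the increasing homeomorphism of (0,1) onto ℝ extended by ψ(0)=−∞, ψ(1)=+∞, and define P : X × M(Y) → ℝ by P(x,ν) = max{t ∈ ℝ | ν({y | p(x,y) ≥ t}) ≥ ψ⁻¹(t)} (the Sugeno integral of p(x,·) against ν). Then P is continuous. -/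
/-- The standard topology on the space of capacities, generated by the subbase
`O₋(F,a) = {ν | ν(F) < a}` for `F` closed and `O₊(U,a) = {ν | ν(U) > a}` for `U` open. -/
def capTop (Y : Type*) [TopologicalSpace Y] : TopologicalSpace (Capacity Y) :=
  TopologicalSpace.generateFrom
    ({S | ∃ (F : Set Y) (a : ℝ), IsClosed F ∧ S = {ν : Capacity Y | ν.toFun F < a}} ∪
     {S | ∃ (U : Set Y) (a : ℝ), IsOpen U ∧ S = {ν : Capacity Y | a < ν.toFun U}})

open Topology Filter in
/-- Continuity of the Sugeno expected payoff: for continuous `p : X × Y → ℝ` on nonempty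
compacta, the function `P(x,ν) = max{t | ν({y | p(x,y) ≥ t}) ≥ ψ⁻¹(t)}` (the Sugeno
integral of `p(x,·)` against `ν`, with `φ = ψ⁻¹` the increasing bijection of `ℝ` onto
`(0,1)`) is continuous on `X × M(Y)`, where `M(Y)` carries the capacity topology. -/
theorem sugeno_payoff_continuous {X Y : Type*} [TopologicalSpace X] [TopologicalSpace Y]
    [CompactSpace X] [CompactSpace Y] [T2Space X] [T2Space Y] [Nonempty X] [Nonempty Y]
    (p : X × Y → ℝ) (hp : Continuous p)
    (φ : ℝ → ℝ) (hφmono : StrictMono φ) (hφcont : Continuous φ)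
    (hφrange : Set.range φ = Set.Ioo (0 : ℝ) 1)
    (P : X × Capacity Y → ℝ)
    (hP : ∀ (x : X) (ν : Capacity Y),
      IsGreatest {t : ℝ | φ t ≤ ν.toFun {y : Y | t ≤ p (x, y)}} (P (x, ν))) :
    @Continuous (X × Capacity Y) ℝ
      (@instTopologicalSpaceProd X (Capacity Y) _ (capTop Y)) _ P := by
  letI : TopologicalSpace (Capacity Y) := capTop Y
  have hFclosed : ∀ (x : X) (t : ℝ), IsClosed {y : Y | t ≤ p (x, y)} := fun x t =>
    isClosed_le continuous_const (hp.comp (Continuous.prodMk_right x))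
  have hdown : ∀ (x : X) (ν : Capacity Y) (c : ℝ), c ≤ P (x, ν) →
      φ c ≤ ν.toFun {y : Y | c ≤ p (x, y)} := by
    intro x ν c hc
    calc φ c ≤ φ (P (x, ν)) := hφmono.monotone hc
    _ ≤ ν.toFun {y : Y | P (x, ν) ≤ p (x, y)} := (hP x ν).1
    _ ≤ ν.toFun {y : Y | c ≤ p (x, y)} :=
        ν.mono (hFclosed _ _) (hFclosed _ _) (fun y hy => le_trans hc hy)
  rw [continuous_iff_continuousAt]
  rintro ⟨x₀, ν₀⟩
  rw [ContinuousAt, nhds_prod_eq, tendsto_order]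
  constructor
  · -- lower semicontinuity
    intro b hb
    set t₀ := P (x₀, ν₀) with ht₀
    set m : ℝ := (b + t₀) / 2 with hm
    set m' : ℝ := (b + m) / 2 with hm'
    have hbm : b < m := by simp only [hm]; linarith
    have hmt : m < t₀ := by simp only [hm]; linarith
    have hbm' : b < m' := by simp only [hm']; linarith
    have hm'm : m' < m := by simp only [hm']; linarith
    set W : Set Y := {y | m < p (x₀, y)} with hW
    have hWopen : IsOpen W := isOpen_lt continuous_const (hp.comp (Continuous.prodMk_right x₀))
    have hν₀W : φ m < ν₀.toFun W := by
      have h0 : φ t₀ ≤ ν₀.toFun {y : Y | t₀ ≤ p (x₀, y)} := (hP x₀ ν₀).1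
      have hsub : {y : Y | t₀ ≤ p (x₀, y)} ⊆ W := fun y hy => lt_of_lt_of_le hmt hy
      have hle : ν₀.toFun {y : Y | t₀ ≤ p (x₀, y)} ≤ ν₀.toFun W := by
        rw [ν₀.innerReg W]
        refine le_csSup ⟨1, ?_⟩ ⟨_, ⟨hFclosed x₀ t₀, hsub⟩, rfl⟩
        rintro r ⟨K, -, rfl⟩
        exact ν₀.le_one K
      exact lt_of_lt_of_le (lt_of_lt_of_le (hφmono hmt) h0) hle
    have hVopen : IsOpen {ν : Capacity Y | φ m < ν.toFun W} :=
      TopologicalSpace.isOpen_generateFrom_of_mem (Or.inr ⟨W, φ m, hWopen, rfl⟩)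
    have hVev : ∀ᶠ ν in 𝓝 ν₀, φ m < ν.toFun W := hVopen.eventually_mem hν₀W
    have hxev : ∀ᶠ x in 𝓝 x₀, ∀ y : Y, p (x₀, y) - (m - m') < p (x, y) := by
      have key : ∀ y ∈ (Set.univ : Set Y), ∀ᶠ (z : X × Y) in 𝓝 (x₀, y),
          (fun x y => p (x₀, y) - (m - m') < p (x, y)) z.1 z.2 := by
        intro y _
        have hopen : IsOpen {z : X × Y | p (x₀, z.2) - (m - m') < p z} :=
          isOpen_lt ((hp.comp (Continuous.prodMk_right x₀)).comp continuous_snd |>.sub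
            continuous_const) hp
        have hmem : (x₀, y) ∈ {z : X × Y | p (x₀, z.2) - (m - m') < p z} := by
          simp only [Set.mem_setOf_eq]
          linarith
        exact hopen.eventually_mem hmem
      exact (isCompact_univ.eventually_forall_of_forall_eventually key).mono
        fun x hx y => hx y (Set.mem_univ y)
    filter_upwards [hxev.prod_inl (𝓝 ν₀), hVev.prod_inr (𝓝 x₀)]
    rintro ⟨x, ν⟩ hx hν
    obtain ⟨r, ⟨K, ⟨hKcl, hKW⟩, rfl⟩, hr⟩ :
        ∃ r ∈ ν.toFun '' {K : Set Y | IsClosed K ∧ K ⊆ W}, φ m < r := by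
      refine exists_lt_of_lt_csSup ⟨ν.toFun ∅, ⟨∅, ⟨isClosed_empty, Set.empty_subset _⟩, rfl⟩⟩ ?_
      rw [← ν.innerReg W]
      exact hν
    have hKF : K ⊆ {y : Y | m' ≤ p (x, y)} := by
      intro y hy
      have h1 : m < p (x₀, y) := hKW hy
      have h2 : p (x₀, y) - (m - m') < p (x, y) := hx y
      simp only [Set.mem_setOf_eq]
      linarith
    have hmem : φ m' ≤ ν.toFun {y : Y | m' ≤ p (x, y)} :=
      le_trans (le_of_lt (lt_trans (hφmono hm'm) hr))
        (ν.mono hKcl (hFclosed x m') hKF)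
    exact lt_of_lt_of_le hbm' ((hP x ν).2 hmem)
  · -- upper semicontinuity
    intro b hb
    set t₀ := P (x₀, ν₀) with ht₀
    set c : ℝ := (t₀ + b) / 2 with hc
    have htc : t₀ < c := by simp only [hc]; linarith
    have hcb : c < b := by simp only [hc]; linarith
    set F' : Set Y := {y | c ≤ p (x₀, y)} with hF'
    have hν₀F' : ν₀.toFun F' < φ c := by
      by_contra h
      push_neg at h
      exact absurd ((hP x₀ ν₀).2 h) (not_le.mpr htc)
    have hVopen : IsOpen {ν : Capacity Y | ν.toFun F' < φ c} :=
      TopologicalSpace.isOpen_generateFrom_of_mem (Or.inl ⟨F', φ c, hFclosed x₀ c, rfl⟩)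
    have hVev : ∀ᶠ ν in 𝓝 ν₀, ν.toFun F' < φ c := hVopen.eventually_mem hν₀F'
    have hxev : ∀ᶠ x in 𝓝 x₀, ∀ y : Y, p (x, y) < p (x₀, y) + (b - c) := by
      have key : ∀ y ∈ (Set.univ : Set Y), ∀ᶠ (z : X × Y) in 𝓝 (x₀, y),
          (fun x y => p (x, y) < p (x₀, y) + (b - c)) z.1 z.2 := by
        intro y _
        have hopen : IsOpen {z : X × Y | p z < p (x₀, z.2) + (b - c)} :=
          isOpen_lt hp ((hp.comp (Continuous.prodMk_right x₀)).comp continuous_snd |>.add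
            continuous_const)
        have hmem : (x₀, y) ∈ {z : X × Y | p z < p (x₀, z.2) + (b - c)} := by
          simp only [Set.mem_setOf_eq]
          linarith
        exact hopen.eventually_mem hmem
      exact (isCompact_univ.eventually_forall_of_forall_eventually key).mono
        fun x hx y => hx y (Set.mem_univ y)
    filter_upwards [hxev.prod_inl (𝓝 ν₀), hVev.prod_inr (𝓝 x₀)]
    rintro ⟨x, ν⟩ hx hν
    by_contra h
    push_neg at h
    have hsub : {y : Y | b ≤ p (x, y)} ⊆ F' := by
      intro y hy
      have h1 : b ≤ p (x, y) := hy
      have h2 : p (x, y) < p (x₀, y) + (b - c) := hx y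
      simp only [hF', Set.mem_setOf_eq]
      linarith
    have : φ b ≤ ν.toFun F' :=
      le_trans (hdown x ν b h) (ν.mono (hFclosed x b) (hFclosed x₀ c) hsub)
    exact absurd (lt_of_le_of_lt this hν) (not_lt.mpr (hφmono.monotone (le_of_lt hcb)))
end

section
/- Let X, Y be nonempty compact Hausdorff spaces, p : X × Y → ℝ continuous, ν a capacity on Y, and t = P(x₀, ν) the Sugeno integral of p(x₀, ·) against ν (with correction homeomorphism ψ). For every ε > 0 there exist an open neighborhood O of x₀ in X and an open neighborhood V of ν in M(Y) such that for all (z, α) ∈ O × V, |P(z, α) − t| < ε, where V may be taken of the form {α | α(A^{x₀}_{≥ t+ε/4}) < ψ⁻¹(t+ε/4)} ∩ {α | α(A^{x₀}_{≥ t−ε/4}) > ψ⁻¹(t−ε/2)} with A^x_{≥s} = {y | p(x,y) ≥ s}. -/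
/-- Local continuity estimate for the Sugeno payoff: with `t = P(x₀, ν)` and `ε > 0`,
there is an open neighborhood `O` of `x₀` such that for the explicit set
`V = {α | α(A^{x₀}_{≥ t+ε/4}) < ψ⁻¹(t+ε/4)} ∩ {α | α(A^{x₀}_{≥ t−ε/4}) > ψ⁻¹(t−ε/2)}`
(which contains `ν`), all `(z, α) ∈ O × V` satisfy `|P(z,α) − t| < ε`. -/
theorem sugeno_payoff_local_estimate {X Y : Type*} [TopologicalSpace X] [TopologicalSpace Y]
    [CompactSpace X] [CompactSpace Y] [T2Space X] [T2Space Y] [Nonempty X] [Nonempty Y]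
    (p : X × Y → ℝ) (hp : Continuous p)
    (φ : ℝ → ℝ) (hφmono : StrictMono φ) (hφcont : Continuous φ)
    (hφrange : Set.range φ = Set.Ioo (0 : ℝ) 1)
    (P : X × Capacity Y → ℝ)
    (hP : ∀ (x : X) (α : Capacity Y),
      IsGreatest {s : ℝ | φ s ≤ α.toFun {y : Y | s ≤ p (x, y)}} (P (x, α)))
    (x₀ : X) (ν : Capacity Y) (t : ℝ) (ht : t = P (x₀, ν)) (ε : ℝ) (hε : 0 < ε) :
    ∃ O : Set X, IsOpen O ∧ x₀ ∈ O ∧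
      ν ∈ ({α : Capacity Y | α.toFun {y : Y | t + ε/4 ≤ p (x₀, y)} < φ (t + ε/4)} ∩
           {α : Capacity Y | φ (t - ε/2) < α.toFun {y : Y | t - ε/4 ≤ p (x₀, y)}}) ∧
      ∀ z ∈ O,
        ∀ α ∈ ({α : Capacity Y | α.toFun {y : Y | t + ε/4 ≤ p (x₀, y)} < φ (t + ε/4)} ∩
               {α : Capacity Y | φ (t - ε/2) < α.toFun {y : Y | t - ε/4 ≤ p (x₀, y)}}),
          |P (z, α) - t| < ε := by
  have hA : ∀ (x : X) (s : ℝ), IsClosed {y : Y | s ≤ p (x, y)} := fun x s =>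
    isClosed_le continuous_const (hp.comp (Continuous.prodMk_right x))
  -- the neighborhood O via the curried continuous map into C(Y, ℝ)
  set f : C(X × Y, ℝ) := ⟨p, hp⟩ with hf
  set F : C(X, C(Y, ℝ)) := f.curry with hF
  refine ⟨F ⁻¹' Metric.ball (F x₀) (ε/4), (Metric.isOpen_ball).preimage F.continuous,
    by simp [hε], ?_, ?_⟩
  · -- ν belongs to V
    have h1 : t ∈ {s : ℝ | φ s ≤ ν.toFun {y : Y | s ≤ p (x₀, y)}} := ht ▸ (hP x₀ ν).1
    constructor
    · -- upper part
      by_contra h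
      simp only [Set.mem_setOf_eq, not_lt] at h
      have h2 : t + ε/4 ≤ P (x₀, ν) := (hP x₀ ν).2 h
      rw [← ht] at h2
      linarith
    · have hsub : {y : Y | t ≤ p (x₀, y)} ⊆ {y : Y | t - ε/4 ≤ p (x₀, y)} :=
        fun y hy => by simp only [Set.mem_setOf_eq] at *; linarith
      have := ν.mono (hA x₀ t) (hA x₀ (t - ε/4)) hsub
      have hφ : φ (t - ε/2) < φ t := hφmono (by linarith)
      exact lt_of_lt_of_le hφ (le_trans h1 this)
  · intro z hz α hα
    obtain ⟨hα1, hα2⟩ := hα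
    simp only [Set.mem_setOf_eq] at hα1 hα2
    have hdist : ∀ y : Y, |p (z, y) - p (x₀, y)| < ε/4 := by
      intro y
      have h1 : dist (F z y) (F x₀ y) ≤ dist (F z) (F x₀) :=
        ContinuousMap.dist_apply_le_dist y
      have h2 : dist (F z) (F x₀) < ε/4 := hz
      have : F z y = p (z, y) := rfl
      have : F x₀ y = p (x₀, y) := rfl
      calc |p (z, y) - p (x₀, y)| = dist (F z y) (F x₀ y) := by
            simp [Real.dist_eq]; rfl
        _ < ε/4 := lt_of_le_of_lt h1 h2
    -- lower bound: t - ε/2 ∈ S(z, α)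
    have hsub1 : {y : Y | t - ε/4 ≤ p (x₀, y)} ⊆ {y : Y | t - ε/2 ≤ p (z, y)} := by
      intro y hy
      simp only [Set.mem_setOf_eq] at *
      have := abs_lt.mp (hdist y)
      linarith [this.1]
    have hlow : t - ε/2 ≤ P (z, α) := by
      refine (hP z α).2 ?_
      have := α.mono (hA x₀ (t - ε/4)) (hA z (t - ε/2)) hsub1
      exact le_of_lt (lt_of_lt_of_le hα2 this)
    -- upper bound
    have hup : P (z, α) < t + ε/2 := by
      by_contra h
      push_neg at h
      have hsub2 : {y : Y | P (z, α) ≤ p (z, y)} ⊆ {y : Y | t + ε/4 ≤ p (x₀, y)} := by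
        intro y hy
        simp only [Set.mem_setOf_eq] at *
        have := abs_lt.mp (hdist y)
        linarith [this.2]
      have hmem := (hP z α).1
      have h2 := α.mono (hA z (P (z, α))) (hA x₀ (t + ε/4)) hsub2
      have h3 : φ (t + ε/4) ≤ φ (P (z, α)) := hφmono.monotone (by linarith)
      simp only [Set.mem_setOf_eq] at hmem
      linarith
    rw [abs_lt]
    constructor <;> linarith
end
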